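/- Consider an object-oriented FMDP with independent transitions whose transition kernel satisfies result symmetry and causation symmetry, and let p be any full-support joint probability mass function on (S, A, S') consistent with the transition kernel. (Local rule) For a class C with field U and state field V, the class-level local causality C.U → C.V (meaning: for every instance O of C, the coordinate kernel T_{O,V} depends on the coordinate O.U) holds if and only if for every instance O of C the conditional independence O.U ⊥_p O.V' | ((S, A) \ {O.U}) fails. (Global rule) For classes C_k and C, with field U of C_k and state field V of C, assume that for every instance O_j of C there exists at least one instance of C_k distinct from O_j; then the class-level global causality C_k.U ⇒ C.V (meaning: for every instance O_j of C and every instance O_r of C_k with r ≠ j, T_{j,V} depends on the coordinate O_r.U) holds if and only if for every instance O_j of C the block of coordinates {O_r.U : O_r an instance of C_k, r ≠ j} is not conditionally independent of O_j.V' given all the remaining current-step coordinates. -/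

import Mathlib

open Finset

noncomputable section

/-- Marginal probability that a configuration agrees with `x` on the coordinates in `E`. -/
def marg {V : Type*} [Fintype V] [DecidableEq V] {val : V → Type*}
    [∀ v, Fintype (val v)] [∀ v, DecidableEq (val v)]
    (p : (∀ v, val v) → ℝ) (E : Finset V) (x : ∀ v, val v) : ℝ :=
  ∑ y : ∀ v, val v, if ∀ v ∈ E, y v = x v then p y else 0

/-- Conditional probability of the value of coordinate `v` given the values of `P`. -/
def condP {V : Type*} [Fintype V] [DecidableEq V] {val : V → Type*}
    [∀ v, Fintype (val v)] [∀ v, DecidableEq (val v)]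
    (p : (∀ v, val v) → ℝ) (v : V) (P : Finset V) (x : ∀ v, val v) : ℝ :=
  marg p (insert v P) x / marg p P x

/-- Conditional independence X ⊥ Y | Z, in cross-multiplied form. -/
def CondIndep {V : Type*} [Fintype V] [DecidableEq V] {val : V → Type*}
    [∀ v, Fintype (val v)] [∀ v, DecidableEq (val v)]
    (p : (∀ v, val v) → ℝ) (X Y Z : Finset V) : Prop :=
  ∀ x : ∀ v, val v,
    marg p (X ∪ Y ∪ Z) x * marg p Z x = marg p (X ∪ Z) x * marg p (Y ∪ Z) x

/-- Variables of an FMDP: states, actions, next states. -/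
abbrev FVar (ns na : ℕ) := Fin ns ⊕ (Fin na ⊕ Fin ns)

/-- Value types of FMDP variables. -/
def fv {ns na : ℕ} (Sv : Fin ns → Type) (Av : Fin na → Type) : FVar ns na → Type :=
  Sum.elim Sv (Sum.elim Av Sv)

instance {ns na : ℕ} (Sv : Fin ns → Type) (Av : Fin na → Type)
    [∀ i, Fintype (Sv i)] [∀ j, Fintype (Av j)] : ∀ v, Fintype (fv Sv Av v)
  | .inl i => inferInstanceAs (Fintype (Sv i))
  | .inr (.inl j) => inferInstanceAs (Fintype (Av j))
  | .inr (.inr k) => inferInstanceAs (Fintype (Sv k))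

instance {ns na : ℕ} (Sv : Fin ns → Type) (Av : Fin na → Type)
    [∀ i, DecidableEq (Sv i)] [∀ j, DecidableEq (Av j)] : ∀ v, DecidableEq (fv Sv Av v)
  | .inl i => inferInstanceAs (DecidableEq (Sv i))
  | .inr (.inl j) => inferInstanceAs (DecidableEq (Av j))
  | .inr (.inr k) => inferInstanceAs (DecidableEq (Sv k))

/-- The set of current-step coordinates. -/
def curSet (ns na : ℕ) : Finset (FVar ns na) :=
  (Finset.univ.image (Sum.inl : Fin ns → FVar ns na)) ∪
    (Finset.univ.image (fun j : Fin na => (Sum.inr (Sum.inl j) : FVar ns na)))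

/-- A joint pmf `p` on (S, A, S') is consistent with the transition kernel `T`. -/
def FConsistent {ns na : ℕ} {Sv : Fin ns → Type} {Av : Fin na → Type}
    [∀ i, Fintype (Sv i)] [∀ j, Fintype (Av j)]
    [∀ i, DecidableEq (Sv i)] [∀ j, DecidableEq (Av j)]
    (p : (∀ v, fv Sv Av v) → ℝ)
    (T : (∀ i, Sv i) → (∀ j, Av j) → (∀ k, Sv k) → ℝ) : Prop :=
  ∀ x, p x = marg p (curSet ns na) x *
    T (fun i => x (.inl i)) (fun j => x (.inr (.inl j))) (fun k => x (.inr (.inr k)))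

/-- The specification of an object-oriented FMDP: `K` classes, class `k` having `Nk k`
instances, state fields `SF k` and action fields `AF k`, with finite nonempty value types. -/
structure OOSpec where
  K : ℕ
  Nk : Fin K → ℕ
  SF : Fin K → Type
  AF : Fin K → Type
  SVal : ∀ k, SF k → Type
  AVal : ∀ k, AF k → Type
  finSF : ∀ k, Fintype (SF k)
  finAF : ∀ k, Fintype (AF k)
  deqSF : ∀ k, DecidableEq (SF k)
  deqAF : ∀ k, DecidableEq (AF k)
  finSVal : ∀ k u, Fintype (SVal k u)
  finAVal : ∀ k v, Fintype (AVal k v)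
  deqSVal : ∀ k u, DecidableEq (SVal k u)
  deqAVal : ∀ k v, DecidableEq (AVal k v)
  neSVal : ∀ k u, Nonempty (SVal k u)
  neAVal : ∀ k v, Nonempty (AVal k v)

attribute [instance] OOSpec.finSF OOSpec.finAF OOSpec.deqSF OOSpec.deqAF
  OOSpec.finSVal OOSpec.finAVal OOSpec.deqSVal OOSpec.deqAVal
  OOSpec.neSVal OOSpec.neAVal

namespace OOSpec

variable (σ : OOSpec)

/-- Objects: the `m`-th instance of class `k`. -/
abbrev ObjIdx := Σ k : Fin σ.K, Fin (σ.Nk k)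

/-- The fields of class `k`: state fields and action fields. -/
abbrev Fd (k : Fin σ.K) := σ.SF k ⊕ σ.AF k

/-- Value type of each field of class `k`. -/
def fval (k : Fin σ.K) : σ.Fd k → Type := Sum.elim (σ.SVal k) (σ.AVal k)

instance (k : Fin σ.K) : ∀ f : σ.Fd k, Fintype (σ.fval k f)
  | .inl u => inferInstanceAs (Fintype (σ.SVal k u))
  | .inr v => inferInstanceAs (Fintype (σ.AVal k v))

instance (k : Fin σ.K) : ∀ f : σ.Fd k, DecidableEq (σ.fval k f)
  | .inl u => inferInstanceAs (DecidableEq (σ.SVal k u))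
  | .inr v => inferInstanceAs (DecidableEq (σ.AVal k v))

/-- The attribute tuple of an instance of class `k`. -/
abbrev Obj (k : Fin σ.K) := ∀ f : σ.Fd k, σ.fval k f

/-- Current configurations: an attribute tuple for every object. -/
abbrev Cur := ∀ o : σ.ObjIdx, σ.Obj o.1

/-- Next-step configurations: values of all next-step state attributes. -/
abbrev Nxt := ∀ o : σ.ObjIdx, ∀ u : σ.SF o.1, σ.SVal o.1 u

theorem fst_swap (a b o : σ.ObjIdx) (h : a.1 = b.1) :
    (Equiv.swap a b o).1 = o.1 := by
  rcases eq_or_ne o a with rfl | ha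
  · rw [Equiv.swap_apply_left]; exact h.symm
  · rcases eq_or_ne o b with rfl | hb
    · rw [Equiv.swap_apply_right]; exact h
    · rw [Equiv.swap_apply_of_ne_of_ne ha hb]

/-- The involution σ_{ab} on current configurations exchanging the attribute tuples of
two instances `a` and `b` of a common class. -/
def swapCur (a b : σ.ObjIdx) (h : a.1 = b.1) (w : σ.Cur) : σ.Cur :=
  fun o => cast (congrArg σ.Obj (σ.fst_swap a b o h)) (w (Equiv.swap a b o))

/-- The conditional law, under `T`, of object `o`'s next-step state attributes at `w`. -/
def objLaw (T : σ.Cur → σ.Nxt → ℝ) (o : σ.ObjIdx) (w : σ.Cur)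
    (y : ∀ u : σ.SF o.1, σ.SVal o.1 u) : ℝ :=
  ∑ x' : σ.Nxt, if x' o = y then T w x' else 0

/-- The marginal of `T(· | w)` on the single next-step coordinate `O_o.u'`
(the coordinate kernel `T_{o,u}`). -/
def coordKer (T : σ.Cur → σ.Nxt → ℝ) (o : σ.ObjIdx) (u : σ.SF o.1) (w : σ.Cur)
    (y : σ.SVal o.1 u) : ℝ :=
  ∑ x' : σ.Nxt, if x' o u = y then T w x' else 0

/-- `T` has independent transitions: it factorizes over the next-step coordinates as the
product of its coordinate kernels. -/
def IndepTrans (T : σ.Cur → σ.Nxt → ℝ) : Prop :=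
  ∀ (w : σ.Cur) (x' : σ.Nxt),
    T w x' = ∏ ou : Σ o : σ.ObjIdx, σ.SF o.1, σ.coordKer T ou.1 ou.2 w (x' ou.1 ou.2)

/-- A function of the current configuration depends on the current-step coordinate
`O_j.f`: it takes different values at two configurations differing only in that coordinate. -/
def DependsOn {α : Type*} (κ : σ.Cur → α) (j : σ.ObjIdx) (f : σ.Fd j.1) : Prop :=
  ∃ w w' : σ.Cur,
    (∀ (o : σ.ObjIdx) (g : σ.Fd o.1),
      (⟨o, g⟩ : Σ o : σ.ObjIdx, σ.Fd o.1) ≠ ⟨j, f⟩ → w o g = w' o g) ∧ κ w ≠ κ w'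

/-- Result symmetry: instances of a common class transit by the same rule. -/
def ResultSym (T : σ.Cur → σ.Nxt → ℝ) : Prop :=
  ∀ (k : Fin σ.K) (m m' : Fin (σ.Nk k)) (w : σ.Cur) (y : ∀ u : σ.SF k, σ.SVal k u),
    σ.objLaw T ⟨k, m⟩ w y = σ.objLaw T ⟨k, m'⟩ (σ.swapCur ⟨k, m⟩ ⟨k, m'⟩ rfl w) y

/-- Causation symmetry: two other instances of a common class are interchangeable for the
transition of any object. -/
def CausSym (T : σ.Cur → σ.Nxt → ℝ) : Prop :=
  ∀ (i : σ.ObjIdx) (k : Fin σ.K) (m m' : Fin (σ.Nk k)),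
    (⟨k, m⟩ : σ.ObjIdx) ≠ i → (⟨k, m'⟩ : σ.ObjIdx) ≠ i →
    ∀ (w : σ.Cur) (y : ∀ u : σ.SF i.1, σ.SVal i.1 u),
      σ.objLaw T i w y = σ.objLaw T i (σ.swapCur ⟨k, m⟩ ⟨k, m'⟩ rfl w) y

end OOSpec

namespace OOSpec

variable (σ : OOSpec)

/-- Current-step coordinates: the attribute `O_o.f`. -/
abbrev CurV := Σ o : σ.ObjIdx, σ.Fd o.1

/-- Next-step coordinates: the attribute `O_o.u'`. -/
abbrev NxtV := Σ o : σ.ObjIdx, σ.SF o.1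

/-- All variables of the OO-FMDP. -/
abbrev Var := σ.CurV ⊕ σ.NxtV

/-- Value type of each variable. -/
def vval : σ.Var → Type
  | .inl v => σ.fval v.1.1 v.2
  | .inr v => σ.SVal v.1.1 v.2

instance : ∀ v : σ.Var, Fintype (σ.vval v)
  | .inl v => inferInstanceAs (Fintype (σ.fval v.1.1 v.2))
  | .inr v => inferInstanceAs (Fintype (σ.SVal v.1.1 v.2))

instance : ∀ v : σ.Var, DecidableEq (σ.vval v)
  | .inl v => inferInstanceAs (DecidableEq (σ.fval v.1.1 v.2))
  | .inr v => inferInstanceAs (DecidableEq (σ.SVal v.1.1 v.2))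

/-- Full configurations of all variables. -/
abbrev Cfg := ∀ v : σ.Var, σ.vval v

/-- The current configuration determined by a full configuration. -/
def curOf (d : σ.Cfg) : σ.Cur := fun o f => d (.inl ⟨o, f⟩)

/-- The next-step configuration determined by a full configuration. -/
def nxtOf (d : σ.Cfg) : σ.Nxt := fun o u => d (.inr ⟨o, u⟩)

/-- Building a full configuration from a current and a next configuration. -/
def mkCfg (w : σ.Cur) (x' : σ.Nxt) : σ.Cfg
  | .inl v => w v.1 v.2
  | .inr v => x' v.1 v.2

/-- The set of all current-step coordinates. -/
def curVars : Finset σ.Var := Finset.univ.image Sum.inl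

/-- A joint pmf on (S, A, S') is consistent with the transition kernel `T`. -/
def Consistent (p : σ.Cfg → ℝ) (T : σ.Cur → σ.Nxt → ℝ) : Prop :=
  ∀ d : σ.Cfg, p d = marg p σ.curVars d * T (σ.curOf d) (σ.nxtOf d)

end OOSpec
namespace OOAux

open OOSpec Finset

lemma path_lemma {ι : Type*} [DecidableEq ι] {π : ι → Type*} {α : Type*}
    (κ : (∀ i, π i) → α) (s : Finset ι)
    (h : ∀ i ∈ s, ∀ w w' : ∀ i, π i, (∀ j, j ≠ i → w j = w' j) → κ w = κ w') :
    ∀ w w' : ∀ i, π i, (∀ j, j ∉ s → w j = w' j) → κ w = κ w' := by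
  classical
  induction s using Finset.induction_on with
  | empty =>
    intro w w' hw
    exact congrArg κ (funext fun j => hw j (by simp))
  | @insert a t ha ih =>
    intro w w' hw
    have h1 : κ w = κ (Function.update w a (w' a)) := by
      refine h a (Finset.mem_insert_self a t) _ _ fun j hj => ?_
      rw [Function.update_of_ne hj]
    rw [h1]
    refine ih (fun i hi => h i (Finset.mem_insert_of_mem hi)) _ _ fun j hj => ?_
    rcases eq_or_ne j a with rfl | hja
    · simp
    · rw [Function.update_of_ne hja]
      exact hw j (by simp [hj, hja])

variable {σ : OOSpec}

/-- reindexing sums over configurations -/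
def cfgEquiv (σ : OOSpec) : σ.Cur × σ.Nxt ≃ σ.Cfg where
  toFun wx := σ.mkCfg wx.1 wx.2
  invFun d := (σ.curOf d, σ.nxtOf d)
  left_inv wx := rfl
  right_inv d := by
    funext v
    cases v with
    | inl v => rfl
    | inr v => rfl

lemma sum_mkCfg (f : σ.Cfg → ℝ) :
    ∑ y : σ.Cfg, f y = ∑ w : σ.Cur, ∑ x' : σ.Nxt, f (σ.mkCfg w x') := by
  rw [← Equiv.sum_comp (cfgEquiv σ) f, Fintype.sum_prod_type]
  rfl

end OOAux
namespace OOAux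
open OOSpec Finset
variable {σ : OOSpec}

set_option maxHeartbeats 2000000

/-- current-marginal as a function of the current configuration -/
def M (σ : OOSpec) (p : σ.Cfg → ℝ) (w : σ.Cur) : ℝ := ∑ x' : σ.Nxt, p (σ.mkCfg w x')

lemma marg_curVars (p : σ.Cfg → ℝ) (d : σ.Cfg) :
    marg p σ.curVars d = M σ p (σ.curOf d) := by
  have hcond : ∀ w : σ.Cur, ∀ x' : σ.Nxt,
      (∀ v ∈ σ.curVars, σ.mkCfg w x' v = d v) ↔ w = σ.curOf d := by
    intro w x'
    constructor
    · intro h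
      funext o f
      exact h (Sum.inl ⟨o, f⟩) (by simp [OOSpec.curVars])
    · rintro rfl v hv
      simp only [OOSpec.curVars, Finset.mem_image, Finset.mem_univ, true_and] at hv
      obtain ⟨cv, rfl⟩ := hv
      rfl
  rw [marg, sum_mkCfg]
  simp only [hcond]
  trans (∑ w : σ.Cur, if w = σ.curOf d then M σ p w else 0)
  · refine Finset.sum_congr rfl fun w _ => ?_
    split <;> simp [M]
  · rw [Finset.sum_ite_eq' Finset.univ, if_pos (Finset.mem_univ _)]

lemma M_pos (p : σ.Cfg → ℝ) (hppos : ∀ d, 0 < p d) (w : σ.Cur) : 0 < M σ p w :=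
  Finset.sum_pos (fun x' _ => hppos _) Finset.univ_nonempty

lemma p_mkCfg (p : σ.Cfg → ℝ) (T : σ.Cur → σ.Nxt → ℝ) (hpcons : σ.Consistent p T)
    (w : σ.Cur) (x' : σ.Nxt) :
    p (σ.mkCfg w x') = M σ p w * T w x' := by
  rw [hpcons (σ.mkCfg w x'), marg_curVars]
  rfl

lemma marg_curVars_union (p : σ.Cfg → ℝ) (T : σ.Cur → σ.Nxt → ℝ)
    (hpcons : σ.Consistent p T) (j : σ.NxtV) (d : σ.Cfg) :
    marg p (σ.curVars ∪ {Sum.inr j}) d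
      = M σ p (σ.curOf d) * σ.coordKer T j.1 j.2 (σ.curOf d) (d (Sum.inr j)) := by
  have hcond : ∀ w : σ.Cur, ∀ x' : σ.Nxt,
      (∀ v ∈ σ.curVars ∪ {Sum.inr j}, σ.mkCfg w x' v = d v) ↔
        (w = σ.curOf d ∧ x' j.1 j.2 = d (Sum.inr j)) := by
    intro w x'
    constructor
    · intro h
      refine ⟨funext fun o => funext fun f => h (Sum.inl ⟨o, f⟩) ?_,
        h (Sum.inr j) (by simp)⟩
      simp [OOSpec.curVars]
    · rintro ⟨rfl, hx⟩ v hv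
      rcases Finset.mem_union.mp hv with hv | hv
      · simp only [OOSpec.curVars, Finset.mem_image, Finset.mem_univ, true_and] at hv
        obtain ⟨cv, rfl⟩ := hv
        rfl
      · obtain rfl := Finset.mem_singleton.mp hv
        exact hx
  rw [marg, sum_mkCfg]
  classical
  simp only [hcond, ite_and]
  trans (∑ w : σ.Cur, if w = σ.curOf d
      then M σ p w * σ.coordKer T j.1 j.2 w (d (Sum.inr j)) else 0)
  · refine Finset.sum_congr rfl fun w _ => ?_
    split
    · delta OOSpec.coordKer; rw [Finset.mul_sum]
      refine Finset.sum_congr rfl fun x' _ => ?_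
      split <;> simp [p_mkCfg p T hpcons]
    · simp
  · rw [Finset.sum_ite_eq' Finset.univ, if_pos (Finset.mem_univ _)]

lemma marg_Z (p : σ.Cfg → ℝ) (X : Finset σ.CurV) (d : σ.Cfg) :
    marg p (σ.curVars \ X.image Sum.inl) d
      = ∑ w : σ.Cur, if (∀ cv : σ.CurV, cv ∉ X → w cv.1 cv.2 = σ.curOf d cv.1 cv.2)
          then M σ p w else 0 := by
  have hcond : ∀ w : σ.Cur, ∀ x' : σ.Nxt,
      (∀ v ∈ σ.curVars \ X.image Sum.inl, σ.mkCfg w x' v = d v) ↔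
        (∀ cv : σ.CurV, cv ∉ X → w cv.1 cv.2 = σ.curOf d cv.1 cv.2) := by
    intro w x'
    constructor
    · intro h cv hcv
      refine h (Sum.inl cv) ?_
      simp only [Finset.mem_sdiff, OOSpec.curVars, Finset.mem_image, Finset.mem_univ,
        true_and]
      exact ⟨⟨cv, rfl⟩, fun ⟨cv', _, hcv'⟩ => hcv (by
        obtain rfl := Sum.inl.inj hcv'; assumption)⟩
    · intro h v hv
      rw [Finset.mem_sdiff] at hv
      obtain ⟨hv1, hv2⟩ := hv
      simp only [OOSpec.curVars, Finset.mem_image, Finset.mem_univ, true_and] at hv1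
      obtain ⟨cv, rfl⟩ := hv1
      refine h cv fun hcv => hv2 ?_
      exact Finset.mem_image.mpr ⟨cv, hcv, rfl⟩
  rw [marg, sum_mkCfg]
  simp only [hcond]
  refine Finset.sum_congr rfl fun w _ => ?_
  split <;> simp [M]

lemma marg_jZ (p : σ.Cfg → ℝ) (T : σ.Cur → σ.Nxt → ℝ)
    (hpcons : σ.Consistent p T) (X : Finset σ.CurV) (j : σ.NxtV) (d : σ.Cfg) :
    marg p ({Sum.inr j} ∪ (σ.curVars \ X.image Sum.inl)) d
      = ∑ w : σ.Cur, if (∀ cv : σ.CurV, cv ∉ X → w cv.1 cv.2 = σ.curOf d cv.1 cv.2)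
          then M σ p w * σ.coordKer T j.1 j.2 w (d (Sum.inr j)) else 0 := by
  have hcond : ∀ w : σ.Cur, ∀ x' : σ.Nxt,
      (∀ v ∈ {Sum.inr j} ∪ (σ.curVars \ X.image Sum.inl), σ.mkCfg w x' v = d v) ↔
        ((∀ cv : σ.CurV, cv ∉ X → w cv.1 cv.2 = σ.curOf d cv.1 cv.2) ∧
          x' j.1 j.2 = d (Sum.inr j)) := by
    intro w x'
    constructor
    · intro h
      constructor
      · intro cv hcv
        refine h (Sum.inl cv) (Finset.mem_union_right _ ?_)
        simp only [Finset.mem_sdiff, OOSpec.curVars, Finset.mem_image, Finset.mem_univ,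
          true_and]
        exact ⟨⟨cv, rfl⟩, fun ⟨cv', _, hcv'⟩ => hcv (by
          obtain rfl := Sum.inl.inj hcv'; assumption)⟩
      · exact h (Sum.inr j) (Finset.mem_union_left _ (by simp))
    · rintro ⟨h, hx⟩ v hv
      rcases Finset.mem_union.mp hv with hv | hv
      · obtain rfl := Finset.mem_singleton.mp hv
        exact hx
      · rw [Finset.mem_sdiff] at hv
        obtain ⟨hv1, hv2⟩ := hv
        simp only [OOSpec.curVars, Finset.mem_image, Finset.mem_univ, true_and] at hv1
        obtain ⟨cv, rfl⟩ := hv1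
        refine h cv fun hcv => hv2 ?_
        exact Finset.mem_image.mpr ⟨cv, hcv, rfl⟩
  rw [marg, sum_mkCfg]
  classical
  simp only [hcond, ite_and]
  refine Finset.sum_congr rfl fun w _ => ?_
  split
  · delta OOSpec.coordKer; rw [Finset.mul_sum]
    refine Finset.sum_congr rfl fun x' _ => ?_
    split <;> simp [p_mkCfg p T hpcons]
  · simp

end OOAux
namespace OOAux
open OOSpec Finset
variable {σ : OOSpec}

set_option maxHeartbeats 2000000

/-- a next-step configuration pinning coordinate `j` to value `y` -/
def pin (σ : OOSpec) (j : σ.NxtV) (y : σ.SVal j.1.1 j.2) : σ.Nxt :=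
  fun o u => if h : (⟨o, u⟩ : σ.NxtV) = j then cast (by rw [← h]) y
    else Classical.arbitrary _

lemma pin_eval (j : σ.NxtV) (y : σ.SVal j.1.1 j.2) : pin σ j y j.1 j.2 = y := by
  have h : (⟨j.1, j.2⟩ : σ.NxtV) = j := rfl
  rw [pin, dif_pos h]
  exact cast_eq_iff_heq.mpr HEq.rfl

lemma key (p : σ.Cfg → ℝ) (T : σ.Cur → σ.Nxt → ℝ)
    (hppos : ∀ d, 0 < p d) (hpcons : σ.Consistent p T)
    (X : Finset σ.CurV) (j : σ.NxtV) :
    CondIndep p (X.image Sum.inl) {Sum.inr j} (σ.curVars \ X.image Sum.inl) ↔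
      ∀ w w' : σ.Cur, (∀ cv : σ.CurV, cv ∉ X → w cv.1 cv.2 = w' cv.1 cv.2) →
        σ.coordKer T j.1 j.2 w = σ.coordKer T j.1 j.2 w' := by
  have hXsub : X.image Sum.inl ⊆ σ.curVars := by
    intro v hv
    obtain ⟨cv, _, rfl⟩ := Finset.mem_image.mp hv
    simp [OOSpec.curVars]
  have hXZ : X.image Sum.inl ∪ (σ.curVars \ X.image Sum.inl) = σ.curVars :=
    Finset.union_sdiff_of_subset hXsub
  have hXjZ : X.image Sum.inl ∪ {Sum.inr j} ∪ (σ.curVars \ X.image Sum.inl)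
      = σ.curVars ∪ {Sum.inr j} := by
    rw [Finset.union_right_comm, hXZ]
  -- intermediate reformulation
  have hEiff : CondIndep p (X.image Sum.inl) {Sum.inr j} (σ.curVars \ X.image Sum.inl) ↔
      ∀ d : σ.Cfg,
        σ.coordKer T j.1 j.2 (σ.curOf d) (d (Sum.inr j)) *
          (∑ w : σ.Cur, if (∀ cv : σ.CurV, cv ∉ X → w cv.1 cv.2 = σ.curOf d cv.1 cv.2)
            then M σ p w else 0)
        = ∑ w : σ.Cur, if (∀ cv : σ.CurV, cv ∉ X → w cv.1 cv.2 = σ.curOf d cv.1 cv.2)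
            then M σ p w * σ.coordKer T j.1 j.2 w (d (Sum.inr j)) else 0 := by
    unfold CondIndep
    refine forall_congr' fun d => ?_
    rw [hXjZ, hXZ, marg_curVars p d, marg_curVars_union p T hpcons j d,
      marg_Z p X d, marg_jZ p T hpcons X j d]
    rw [mul_assoc]
    exact mul_right_inj' (ne_of_gt (M_pos p hppos _))
  rw [hEiff]
  constructor
  · -- E → constancy
    intro hE w w' hag
    funext y
    set d := σ.mkCfg w (pin σ j y) with hd
    set d' := σ.mkCfg w' (pin σ j y) with hd'
    have hcd : σ.curOf d = w := rfl
    have hcd' : σ.curOf d' = w' := rfl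
    have hdj : d (Sum.inr j) = y := pin_eval j y
    have hdj' : d' (Sum.inr j) = y := pin_eval j y
    have h1 := hE d
    have h2 := hE d'
    rw [hcd, hdj] at h1
    rw [hcd', hdj'] at h2
    have hCiff : ∀ u : σ.Cur,
        (∀ cv : σ.CurV, cv ∉ X → u cv.1 cv.2 = w' cv.1 cv.2) ↔
        (∀ cv : σ.CurV, cv ∉ X → u cv.1 cv.2 = w cv.1 cv.2) :=
      fun u => forall_congr' fun cv => forall_congr' fun hcv => by rw [hag cv hcv]
    have hSZ : (∑ u : σ.Cur, if (∀ cv : σ.CurV, cv ∉ X → u cv.1 cv.2 = w' cv.1 cv.2)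
          then M σ p u else 0)
        = ∑ u : σ.Cur, if (∀ cv : σ.CurV, cv ∉ X → u cv.1 cv.2 = w cv.1 cv.2)
          then M σ p u else 0 :=
      Finset.sum_congr rfl fun u _ => by simp only [hCiff u]
    have hSk : (∑ u : σ.Cur, if (∀ cv : σ.CurV, cv ∉ X → u cv.1 cv.2 = w' cv.1 cv.2)
          then M σ p u * σ.coordKer T j.1 j.2 u y else 0)
        = ∑ u : σ.Cur, if (∀ cv : σ.CurV, cv ∉ X → u cv.1 cv.2 = w cv.1 cv.2)
          then M σ p u * σ.coordKer T j.1 j.2 u y else 0 :=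
      Finset.sum_congr rfl fun u _ => by simp only [hCiff u]
    rw [hSZ, hSk] at h2
    have hSZpos : 0 < ∑ u : σ.Cur,
        if (∀ cv : σ.CurV, cv ∉ X → u cv.1 cv.2 = w cv.1 cv.2) then M σ p u else 0 := by
      refine Finset.sum_pos' (fun u _ => ?_) ⟨w, Finset.mem_univ w, ?_⟩
      · split
        · exact le_of_lt (M_pos p hppos u)
        · exact le_refl 0
      · rw [if_pos fun cv _ => rfl]
        exact M_pos p hppos w
    exact mul_right_cancel₀ (ne_of_gt hSZpos) (h1.trans h2.symm)
  · -- constancy → E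
    intro hconst d
    have hker : ∀ u : σ.Cur,
        (∀ cv : σ.CurV, cv ∉ X → u cv.1 cv.2 = σ.curOf d cv.1 cv.2) →
        σ.coordKer T j.1 j.2 u = σ.coordKer T j.1 j.2 (σ.curOf d) :=
      fun u hu => hconst u (σ.curOf d) hu
    have hsum : (∑ u : σ.Cur,
          if (∀ cv : σ.CurV, cv ∉ X → u cv.1 cv.2 = σ.curOf d cv.1 cv.2)
            then M σ p u * σ.coordKer T j.1 j.2 u (d (Sum.inr j)) else 0)
        = (∑ u : σ.Cur,
          if (∀ cv : σ.CurV, cv ∉ X → u cv.1 cv.2 = σ.curOf d cv.1 cv.2)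
            then M σ p u else 0) * σ.coordKer T j.1 j.2 (σ.curOf d) (d (Sum.inr j)) := by
      rw [Finset.sum_mul]
      refine Finset.sum_congr rfl fun u _ => ?_
      by_cases h : ∀ cv : σ.CurV, cv ∉ X → u cv.1 cv.2 = σ.curOf d cv.1 cv.2
      · rw [if_pos h, if_pos h, hker u h]
      · rw [if_neg h, if_neg h, zero_mul]
    rw [hsum, mul_comm]

end OOAux
namespace OOAux
open OOSpec Finset
variable {σ : OOSpec}

set_option maxHeartbeats 2000000

lemma const_iff_not_dep {α : Type*} (κ : σ.Cur → α) (X : Finset σ.CurV) :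
    (∀ w w' : σ.Cur, (∀ cv : σ.CurV, cv ∉ X → w cv.1 cv.2 = w' cv.1 cv.2) → κ w = κ w')
      ↔ ∀ v ∈ X, ¬ σ.DependsOn κ v.1 v.2 := by
  constructor
  · intro hconst v hv hdep
    obtain ⟨w, w', hag, hne⟩ := hdep
    refine hne (hconst w w' fun cv hcv => hag cv.1 cv.2 fun he => hcv ?_)
    exact (show cv = v from he) ▸ hv
  · intro hnd w w' hag
    have h : ∀ cv ∈ X, ∀ g g' : ∀ u : σ.CurV, σ.fval u.1.1 u.2,
        (∀ u, u ≠ cv → g u = g' u) →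
        κ (fun o f => g ⟨o, f⟩) = κ (fun o f => g' ⟨o, f⟩) := by
      intro cv hcv g g' hgg
      by_contra hne
      exact hnd cv hcv ⟨fun o f => g ⟨o, f⟩, fun o f => g' ⟨o, f⟩,
        fun o f hof => hgg ⟨o, f⟩ hof, hne⟩
    exact path_lemma
      (fun g : ∀ u : σ.CurV, σ.fval u.1.1 u.2 => κ (fun o f => g ⟨o, f⟩)) X h
      (fun u => w u.1 u.2) (fun u => w' u.1 u.2) (fun u hu => hag u hu)

lemma ncif (p : σ.Cfg → ℝ) (T : σ.Cur → σ.Nxt → ℝ)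
    (hppos : ∀ d, 0 < p d) (hpcons : σ.Consistent p T)
    (X : Finset σ.CurV) (j : σ.NxtV) :
    ¬ CondIndep p (X.image Sum.inl) {Sum.inr j} (σ.curVars \ X.image Sum.inl) ↔
      ∃ v ∈ X, σ.DependsOn (σ.coordKer T j.1 j.2) v.1 v.2 := by
  rw [key p T hppos hpcons X j, const_iff_not_dep]
  push_neg
  rfl

lemma swapCur_apply_heq (a b : σ.ObjIdx) (h : a.1 = b.1) (w : σ.Cur) (o : σ.ObjIdx) :
    HEq (σ.swapCur a b h w o) (w (Equiv.swap a b o)) := cast_heq _ _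

lemma swapCur_left (l : Fin σ.K) (r r' : Fin (σ.Nk l)) (w : σ.Cur) :
    σ.swapCur ⟨l, r⟩ ⟨l, r'⟩ rfl w ⟨l, r⟩ = w ⟨l, r'⟩ := by
  have h2 := swapCur_apply_heq (⟨l, r⟩ : σ.ObjIdx) ⟨l, r'⟩ rfl w ⟨l, r⟩
  rw [Equiv.swap_apply_left] at h2
  exact eq_of_heq h2

lemma swapCur_right (l : Fin σ.K) (r r' : Fin (σ.Nk l)) (w : σ.Cur) :
    σ.swapCur ⟨l, r⟩ ⟨l, r'⟩ rfl w ⟨l, r'⟩ = w ⟨l, r⟩ := by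
  have h2 := swapCur_apply_heq (⟨l, r⟩ : σ.ObjIdx) ⟨l, r'⟩ rfl w ⟨l, r'⟩
  rw [Equiv.swap_apply_right] at h2
  exact eq_of_heq h2

lemma swapCur_other (a b : σ.ObjIdx) (h : a.1 = b.1) (w : σ.Cur) (o : σ.ObjIdx)
    (ha : o ≠ a) (hb : o ≠ b) : σ.swapCur a b h w o = w o := by
  have h2 := swapCur_apply_heq a b h w o
  rw [Equiv.swap_apply_of_ne_of_ne ha hb] at h2
  exact eq_of_heq h2

lemma coordKer_eq_objLaw_sum (T : σ.Cur → σ.Nxt → ℝ) (o : σ.ObjIdx) (u : σ.SF o.1)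
    (w : σ.Cur) (y : σ.SVal o.1 u) :
    σ.coordKer T o u w y
      = ∑ ys : (∀ u' : σ.SF o.1, σ.SVal o.1 u'),
          if ys u = y then σ.objLaw T o w ys else 0 := by
  symm
  calc ∑ ys : (∀ u' : σ.SF o.1, σ.SVal o.1 u'), (if ys u = y then σ.objLaw T o w ys else 0)
      = ∑ ys : (∀ u' : σ.SF o.1, σ.SVal o.1 u'), ∑ x' : σ.Nxt,
          if x' o = ys then (if ys u = y then T w x' else 0) else 0 := by
        refine Finset.sum_congr rfl fun ys _ => ?_
        by_cases h : ys u = y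
        · rw [if_pos h, OOSpec.objLaw]
          refine Finset.sum_congr rfl fun x' _ => ?_
          by_cases h2 : x' o = ys
          · rw [if_pos h2, if_pos h2, if_pos h]
          · rw [if_neg h2, if_neg h2]
        · rw [if_neg h]
          exact (Finset.sum_eq_zero fun x' _ => by rw [if_neg h, ite_self]).symm
    _ = ∑ x' : σ.Nxt, ∑ ys : (∀ u' : σ.SF o.1, σ.SVal o.1 u'),
          if x' o = ys then (if ys u = y then T w x' else 0) else 0 := Finset.sum_comm
    _ = ∑ x' : σ.Nxt, if x' o u = y then T w x' else 0 := by
        refine Finset.sum_congr rfl fun x' _ => ?_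
        rw [Finset.sum_ite_eq Finset.univ (x' o)
          (fun ys => if ys u = y then T w x' else 0), if_pos (Finset.mem_univ _)]
    _ = σ.coordKer T o u w y := rfl

lemma coordKer_swap (T : σ.Cur → σ.Nxt → ℝ) (hcaus : σ.CausSym T)
    (i : σ.ObjIdx) (u : σ.SF i.1) (k : Fin σ.K) (m m' : Fin (σ.Nk k))
    (hm : (⟨k, m⟩ : σ.ObjIdx) ≠ i) (hm' : (⟨k, m'⟩ : σ.ObjIdx) ≠ i) (w : σ.Cur) :
    σ.coordKer T i u w = σ.coordKer T i u (σ.swapCur ⟨k, m⟩ ⟨k, m'⟩ rfl w) := by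
  funext y
  rw [coordKer_eq_objLaw_sum, coordKer_eq_objLaw_sum]
  exact Finset.sum_congr rfl fun ys _ => by rw [hcaus i k m m' hm hm' w ys]

lemma dep_transfer (T : σ.Cur → σ.Nxt → ℝ) (hcaus : σ.CausSym T)
    (i : σ.ObjIdx) (V : σ.SF i.1) (l : Fin σ.K) (r r' : Fin (σ.Nk l))
    (hr : (⟨l, r⟩ : σ.ObjIdx) ≠ i) (hr' : (⟨l, r'⟩ : σ.ObjIdx) ≠ i) (U : σ.Fd l)
    (hdep : σ.DependsOn (σ.coordKer T i V) ⟨l, r⟩ U) :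
    σ.DependsOn (σ.coordKer T i V) ⟨l, r'⟩ U := by
  rcases eq_or_ne r r' with rfl | hrr
  · exact hdep
  obtain ⟨w, w', hag, hne⟩ := hdep
  refine ⟨σ.swapCur ⟨l, r⟩ ⟨l, r'⟩ rfl w, σ.swapCur ⟨l, r⟩ ⟨l, r'⟩ rfl w', ?_, ?_⟩
  · intro o g hog
    by_cases h1 : o = (⟨l, r⟩ : σ.ObjIdx)
    · subst h1
      rw [swapCur_left, swapCur_left]
      refine hag ⟨l, r'⟩ g fun h => ?_
      have : r' = r := by
        have h2 := (Sigma.mk.inj_iff.mp (congrArg Sigma.fst h)).2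
        exact eq_of_heq h2
      exact hrr this.symm
    · by_cases h2 : o = (⟨l, r'⟩ : σ.ObjIdx)
      · subst h2
        rw [swapCur_right, swapCur_right]
        refine hag ⟨l, r⟩ g fun h => ?_
        have hgU : g = U := eq_of_heq (Sigma.mk.inj_iff.mp h).2
        exact hog (by rw [hgU])
      · rw [swapCur_other _ _ _ _ _ h1 h2, swapCur_other _ _ _ _ _ h1 h2]
        exact hag o g fun h => h1 (congrArg Sigma.fst h)
  · rw [← coordKer_swap T hcaus i V l r r' hr hr' w,
      ← coordKer_swap T hcaus i V l r r' hr hr' w']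
    exact hne

end OOAux

set_option maxHeartbeats 2000000 in
open OOSpec in
/-- In an OO-FMDP with independent transitions, result symmetry and
causation symmetry, and for any full-support consistent pmf `p`: the class-level local
causality C.U → C.V holds iff the corresponding conditional independence fails for every
instance, and (provided every instance of the target class sees at least one distinct
instance of the source class) the class-level global causality C_k.U ⇒ C.V holds iff for
every target instance the whole source block fails to be conditionally independent of its
next-step attribute given all remaining current-step coordinates. -/
theorem oo_fmdp_class_level_causal_discovery
    (σ : OOSpec) (T : σ.Cur → σ.Nxt → ℝ)
    (hT0 : ∀ w x', 0 ≤ T w x') (hT1 : ∀ w, ∑ x', T w x' = 1)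
    (hind : σ.IndepTrans T) (hres : σ.ResultSym T) (hcaus : σ.CausSym T)
    (p : σ.Cfg → ℝ)
    (hppos : ∀ d, 0 < p d) (hpsum : ∑ d, p d = 1) (hpcons : σ.Consistent p T) :
    -- local rule
    (∀ (k : Fin σ.K) (U : σ.Fd k) (V : σ.SF k),
      (∀ m : Fin (σ.Nk k), σ.DependsOn (σ.coordKer T ⟨k, m⟩ V) ⟨k, m⟩ U) ↔
      (∀ m : Fin (σ.Nk k),
        ¬ CondIndep p {Sum.inl ⟨⟨k, m⟩, U⟩} {Sum.inr ⟨⟨k, m⟩, V⟩}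
          (σ.curVars \ {Sum.inl ⟨⟨k, m⟩, U⟩}))) ∧
    -- global rule
    (∀ (l : Fin σ.K) (U : σ.Fd l) (k : Fin σ.K) (V : σ.SF k),
      (∀ m : Fin (σ.Nk k), ∃ r : Fin (σ.Nk l), (⟨l, r⟩ : σ.ObjIdx) ≠ ⟨k, m⟩) →
      ((∀ (m : Fin (σ.Nk k)) (r : Fin (σ.Nk l)), (⟨l, r⟩ : σ.ObjIdx) ≠ ⟨k, m⟩ →
          σ.DependsOn (σ.coordKer T ⟨k, m⟩ V) ⟨l, r⟩ U) ↔
       (∀ m : Fin (σ.Nk k),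
        ¬ CondIndep p
          ((Finset.univ.filter (fun r : Fin (σ.Nk l) => (⟨l, r⟩ : σ.ObjIdx) ≠ ⟨k, m⟩)).image
            (fun r => (Sum.inl ⟨⟨l, r⟩, U⟩ : σ.Var)))
          {Sum.inr ⟨⟨k, m⟩, V⟩}
          (σ.curVars \
            ((Finset.univ.filter (fun r : Fin (σ.Nk l) => (⟨l, r⟩ : σ.ObjIdx) ≠ ⟨k, m⟩)).image
              (fun r => (Sum.inl ⟨⟨l, r⟩, U⟩ : σ.Var))))))) := by
  constructor
  · -- local rule
    intro k U V
    refine forall_congr' fun m => ?_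
    have h := OOAux.ncif p T hppos hpcons ({⟨⟨k, m⟩, U⟩} : Finset σ.CurV) ⟨⟨k, m⟩, V⟩
    rw [Finset.image_singleton] at h
    rw [h]
    constructor
    · intro hdep
      exact ⟨⟨⟨k, m⟩, U⟩, Finset.mem_singleton_self _, hdep⟩
    · rintro ⟨v, hv, hdep⟩
      obtain rfl := Finset.mem_singleton.mp hv
      exact hdep
  · -- global rule
    intro l U k V hne
    constructor
    · intro hdep m
      have h := OOAux.ncif p T hppos hpcons
        ((Finset.univ.filter (fun r : Fin (σ.Nk l) => (⟨l, r⟩ : σ.ObjIdx) ≠ ⟨k, m⟩)).image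
          (fun r => (⟨⟨l, r⟩, U⟩ : σ.CurV))) ⟨⟨k, m⟩, V⟩
      rw [Finset.image_image] at h
      rw [show ((fun v : σ.CurV => (Sum.inl v : σ.Var)) ∘
          (fun r : Fin (σ.Nk l) => (⟨⟨l, r⟩, U⟩ : σ.CurV)))
        = (fun r : Fin (σ.Nk l) => (Sum.inl ⟨⟨l, r⟩, U⟩ : σ.Var)) from rfl] at h
      rw [h]
      obtain ⟨r, hr⟩ := hne m
      exact ⟨⟨⟨l, r⟩, U⟩,
        Finset.mem_image.mpr ⟨r, Finset.mem_filter.mpr ⟨Finset.mem_univ r, hr⟩, rfl⟩,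
        hdep m r hr⟩
    · intro hci m r hr
      have h := OOAux.ncif p T hppos hpcons
        ((Finset.univ.filter (fun r : Fin (σ.Nk l) => (⟨l, r⟩ : σ.ObjIdx) ≠ ⟨k, m⟩)).image
          (fun r => (⟨⟨l, r⟩, U⟩ : σ.CurV))) ⟨⟨k, m⟩, V⟩
      rw [Finset.image_image] at h
      rw [show ((fun v : σ.CurV => (Sum.inl v : σ.Var)) ∘
          (fun r : Fin (σ.Nk l) => (⟨⟨l, r⟩, U⟩ : σ.CurV)))
        = (fun r : Fin (σ.Nk l) => (Sum.inl ⟨⟨l, r⟩, U⟩ : σ.Var)) from rfl] at h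
      obtain ⟨v, hv, hdep⟩ := h.mp (hci m)
      obtain ⟨r0, hr0mem, rfl⟩ := Finset.mem_image.mp hv
      have hr0 : (⟨l, r0⟩ : σ.ObjIdx) ≠ ⟨k, m⟩ := (Finset.mem_filter.mp hr0mem).2
      exact OOAux.dep_transfer T hcaus ⟨k, m⟩ V l r0 r hr0 hr U hdep
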